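/- Let ξ : ℕ → ℕ be the Collatz map, ξₙ its n-fold iterate, and for each n let ν⁽ⁿ⁾(ε₀) and ν⁽ⁿ⁾(ε₁) denote respectively the asymptotic densities of {k ∈ ℕ : ξₙ(k) even} and {k ∈ ℕ : ξₙ(k) odd}. Then lim_{n→∞} ν⁽ⁿ⁾(ε₀) = 2/3 and lim_{n→∞} ν⁽ⁿ⁾(ε₁) = 1/3. -/

import Mathlib

open Filter Topology

/-- The Collatz map. -/
def collatz (n : ℕ) : ℕ := if n % 2 = 0 then n / 2 else 3 * n + 1

namespace CollatzAux

open Finset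

lemma collatz_even {n : ℕ} (h : n % 2 = 0) : collatz n = n / 2 := if_pos h
lemma collatz_odd {n : ℕ} (h : n % 2 = 1) : collatz n = 3 * n + 1 := if_neg (by omega)

/-- Affine periodicity of Collatz iterates. -/
lemma collatz_iter_affine (n : ℕ) : ∀ k : ℕ, ∃ c : ℕ, ∀ m : ℕ,
    collatz^[n] (k + 2^n * m) = collatz^[n] k + c * m := by
  induction n with
  | zero => exact fun k => ⟨1, fun m => by simp⟩
  | succ n ih =>
    intro k
    obtain ⟨c, hc⟩ := ih k
    have key : ∀ m, collatz^[n] (k + 2^(n+1) * m) = collatz^[n] k + 2 * (c * m) := by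
      intro m
      have := hc (2 * m)
      rw [show k + 2^(n+1) * m = k + 2^n * (2 * m) by ring, this]; ring
    by_cases h : collatz^[n] k % 2 = 0
    · refine ⟨c, fun m => ?_⟩
      rw [Function.iterate_succ_apply', Function.iterate_succ_apply', key m,
        collatz_even h, collatz_even (by omega)]
      omega
    · refine ⟨6 * c, fun m => ?_⟩
      rw [Function.iterate_succ_apply', Function.iterate_succ_apply', key m,
        collatz_odd (by omega), collatz_odd (by omega)]
      ring

/-- Mod-2^j periodicity with period 2^(n+j). -/
lemma collatz_iter_mod_period (n j k m : ℕ) :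
    collatz^[n] (k + 2^(n+j) * m) % 2^j = collatz^[n] k % 2^j := by
  obtain ⟨c, hc⟩ := collatz_iter_affine n k
  have h1 : k + 2^(n+j) * m = k + 2^n * (2^j * m) := by ring
  rw [h1, hc, show c * (2^j * m) = 2^j * (c * m) by ring, Nat.add_mul_mod_self_left]

/-- One Collatz step respects congruences (losing one power of 2). -/
lemma collatz_mod_congr {a b j : ℕ} (h : a % 2^(j+1) = b % 2^(j+1)) :
    collatz a % 2^j = collatz b % 2^j := by
  have hpar : a % 2 = b % 2 := by
    have ha := Nat.mod_mod_of_dvd a (show (2:ℕ) ∣ 2^(j+1) from dvd_pow_self 2 (Nat.succ_ne_zero j))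
    have hb := Nat.mod_mod_of_dvd b (show (2:ℕ) ∣ 2^(j+1) from dvd_pow_self 2 (Nat.succ_ne_zero j))
    rw [← ha, ← hb, h]
  by_cases he : a % 2 = 0
  · rw [collatz_even he, collatz_even (hpar ▸ he)]
    have h2 : ∀ x : ℕ, x / 2 % 2^j = x % (2 * 2^j) / 2 := fun x =>
      (Nat.mod_mul_right_div_self x 2 (2^j)).symm
    rw [h2 a, h2 b, show 2 * 2^j = 2^(j+1) by ring, h]
  · have ho : a % 2 = 1 := by omega
    rw [collatz_odd ho, collatz_odd (hpar ▸ ho)]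
    have hj : a ≡ b [MOD 2^j] := by
      have : a ≡ b [MOD 2^(j+1)] := h
      exact this.of_dvd (pow_dvd_pow 2 (Nat.le_succ j))
    exact ((hj.mul_left 3).add_right 1)

/-- Unique solution of 3u+1 ≡ x mod 2^t. -/
lemma three_inv_count (t x : ℕ) (hx : x < 2^t) :
    ∃ u, u < 2^t ∧ (3*u+1) % 2^t = x ∧ ∀ v, v < 2^t → (3*v+1) % 2^t = x → v = u := by
  have hcop : Nat.Coprime 3 (2^t) := Nat.Coprime.pow_right t (by decide)
  have hinj : Set.InjOn (fun y => (3*y+1) % 2^t) (range (2^t)) := by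
    intro a ha b hb h
    simp only [Finset.coe_range, Set.mem_Iio] at ha hb
    have h2 : 3*a ≡ 3*b [MOD 2^t] := (Nat.ModEq.add_right_cancel' 1 h)
    have h3 : a ≡ b [MOD 2^t] := h2.cancel_left_of_coprime hcop.symm
    rwa [Nat.ModEq, Nat.mod_eq_of_lt ha, Nat.mod_eq_of_lt hb] at h3
  have himg : (range (2^t)).image (fun y => (3*y+1) % 2^t) = range (2^t) := by
    apply Finset.eq_of_subset_of_card_le
    · intro z hz
      simp only [Finset.mem_image] at hz
      obtain ⟨y, _, rfl⟩ := hz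
      exact Finset.mem_range.mpr (Nat.mod_lt _ (by positivity))
    · rw [Finset.card_image_of_injOn hinj]
  have hmem : x ∈ (range (2^t)).image (fun y => (3*y+1) % 2^t) := by
    rw [himg]; exact Finset.mem_range.mpr hx
  simp only [Finset.mem_image, Finset.mem_range] at hmem
  obtain ⟨u, hu, hux⟩ := hmem
  refine ⟨u, hu, hux, fun v hv hvx => ?_⟩
  exact hinj (by simpa using hv) (by simpa using hu) (by simp [hvx, hux])

/-- Even preimages: exactly one even y < 2^(j+2) with collatz y ≡ x mod 2^(j+1). -/
lemma cardE (j x : ℕ) (hx : x < 2^(j+1)) :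
    ((range (2^(j+2))).filter (fun y => y % 2 = 0 ∧ collatz y % 2^(j+1) = x)).card = 1 := by
  have hP2 : (2:ℕ)^(j+2) = 2 * 2^(j+1) := by ring
  have hset : (range (2^(j+2))).filter (fun y => y % 2 = 0 ∧ collatz y % 2^(j+1) = x)
      = {2*x} := by
    ext y
    simp only [Finset.mem_filter, Finset.mem_range, Finset.mem_singleton]
    constructor
    · rintro ⟨hy, he, hc⟩
      rw [collatz_even he, Nat.mod_eq_of_lt (by omega)] at hc
      omega
    · rintro rfl
      have h2 : (2*x) % 2 = 0 := by omega
      refine ⟨by omega, h2, ?_⟩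
      rw [collatz_even h2, show 2 * x / 2 = x by omega, Nat.mod_eq_of_lt hx]
  rw [hset, Finset.card_singleton]

/-- Odd preimages when x is even: exactly two. -/
lemma cardO_even (j x : ℕ) (hx : x < 2^(j+1)) (hxe : x % 2 = 0) :
    ((range (2^(j+2))).filter (fun y => y % 2 = 1 ∧ collatz y % 2^(j+1) = x)).card = 2 := by
  obtain ⟨u, hu, hux, huniq⟩ := three_inv_count (j+1) x hx
  have hP : (0:ℕ) < 2^(j+1) := by positivity
  have hPe : (2:ℕ)^(j+1) % 2 = 0 := by
    have : (2:ℕ) ∣ 2^(j+1) := dvd_pow_self 2 (Nat.succ_ne_zero j)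
    omega
  have huo : u % 2 = 1 := by
    have h1 : (3*u+1) % 2^(j+1) % 2 = x % 2 := by rw [hux]
    rw [Nat.mod_mod_of_dvd _ (dvd_pow_self 2 (Nat.succ_ne_zero j))] at h1
    omega
  have hP2 : (2:ℕ)^(j+2) = 2 * 2^(j+1) := by ring
  have hset : (range (2^(j+2))).filter (fun y => y % 2 = 1 ∧ collatz y % 2^(j+1) = x)
      = {u, u + 2^(j+1)} := by
    ext y
    simp only [Finset.mem_filter, Finset.mem_range, Finset.mem_insert, Finset.mem_singleton]
    constructor
    · rintro ⟨hy, ho, hc⟩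
      rw [collatz_odd ho] at hc
      have hy' : (3 * (y % 2^(j+1)) + 1) % 2^(j+1) = x := by
        have h3 : y % 2^(j+1) ≡ y [MOD 2^(j+1)] := Nat.mod_modEq y (2^(j+1))
        have := ((h3.mul_left 3).add_right 1)
        rw [Nat.ModEq] at this
        omega
      have hylt : y % 2^(j+1) < 2^(j+1) := Nat.mod_lt _ hP
      have huy := huniq _ hylt hy'
      have hdm := Nat.div_add_mod y (2^(j+1))
      have hdiv : y / 2^(j+1) < 2 := Nat.div_lt_of_lt_mul (by omega)
      have hq : y / 2^(j+1) = 0 ∨ y / 2^(j+1) = 1 := by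
        revert hdiv; generalize y / 2^(j+1) = q; omega
      rcases hq with hq | hq <;> rw [hq] at hdm <;> omega
    · have hcol : ∀ z, z % 2 = 1 → z % 2^(j+1) = u → collatz z % 2^(j+1) = x := by
        intro z hzo hzu
        rw [collatz_odd hzo]
        have h3 : z ≡ z % 2^(j+1) [MOD 2^(j+1)] := (Nat.mod_modEq z _).symm
        have h4 : (3*z+1) % 2^(j+1) = (3*(z % 2^(j+1))+1) % 2^(j+1) :=
          ((h3.mul_left 3).add_right 1)
        rw [h4, hzu, hux]
      rintro (rfl | rfl)
      · exact ⟨by omega, huo, hcol _ huo (Nat.mod_eq_of_lt hu)⟩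
      · refine ⟨by omega, by omega, hcol _ (by omega) ?_⟩
        rw [Nat.add_mod_right, Nat.mod_eq_of_lt hu]
  rw [hset]
  rw [Finset.card_insert_of_notMem (by simp), Finset.card_singleton]

/-- Odd preimages when x is odd: none. -/
lemma cardO_odd (j x : ℕ) (hxo : x % 2 = 1) :
    ((range (2^(j+2))).filter (fun y => y % 2 = 1 ∧ collatz y % 2^(j+1) = x)).card = 0 := by
  rw [Finset.card_eq_zero, Finset.filter_eq_empty_iff]
  rintro y - ⟨ho, hc⟩
  rw [collatz_odd ho] at hc
  have : (3*y+1) % 2^(j+1) % 2 = (3*y+1) % 2 :=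
    Nat.mod_mod_of_dvd _ (dvd_pow_self 2 (Nat.succ_ne_zero j))
  omega

/-- Per-period counts of even/odd values of the n-th Collatz iterate. -/
def cpar : ℕ → ℕ × ℕ
  | 0 => (1, 1)
  | n+1 => ((cpar n).1 + 2 * (cpar n).2, (cpar n).1)

/-- Main counting lemma: residues of collatz^[n] modulo 2^(j+1) are equidistributed
within each parity class, over a full period 2^(n+j+1). -/
lemma collatz_count (n : ℕ) : ∀ j x, x < 2^(j+1) →
    ((range (2^(n+j+1))).filter (fun r => collatz^[n] r % 2^(j+1) = x)).card
      = if x % 2 = 0 then (cpar n).1 else (cpar n).2 := by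
  induction n with
  | zero =>
    intro j x hx
    have hset : (range (2^(0+j+1))).filter (fun r => collatz^[0] r % 2^(j+1) = x) = {x} := by
      ext r
      simp only [Finset.mem_filter, Finset.mem_range, Function.iterate_zero, id_eq,
        Finset.mem_singleton, zero_add]
      constructor
      · rintro ⟨hr, hm⟩
        rwa [Nat.mod_eq_of_lt hr] at hm
      · rintro rfl
        exact ⟨hx, Nat.mod_eq_of_lt hx⟩
    rw [hset, Finset.card_singleton]
    simp [cpar]
  | succ n ih =>
    intro j x hx
    have hexp : n + 1 + j + 1 = n + (j+1) + 1 := by omega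
    have hpred : ∀ r, (collatz^[n+1] r % 2^(j+1) = x)
        ↔ (collatz (collatz^[n] r % 2^(j+2)) % 2^(j+1) = x) := by
      intro r
      rw [Function.iterate_succ_apply']
      have : collatz (collatz^[n] r) % 2^(j+1)
          = collatz (collatz^[n] r % 2^(j+2)) % 2^(j+1) :=
        collatz_mod_congr (j := j+1) (Nat.mod_mod_of_dvd _ dvd_rfl).symm
      rw [this]
    have hcard :
        ((range (2^(n+1+j+1))).filter (fun r => collatz^[n+1] r % 2^(j+1) = x)).card
        = ∑ y ∈ range (2^(j+2)),
            (if collatz y % 2^(j+1) = x then 1 else 0) *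
            ((range (2^(n+1+j+1))).filter (fun r => collatz^[n] r % 2^(j+2) = y)).card := by
      rw [Finset.card_filter]
      rw [← Finset.sum_fiberwise_of_maps_to
        (g := fun r => collatz^[n] r % 2^(j+2)) (t := range (2^(j+2)))
        (fun r _ => Finset.mem_range.mpr (Nat.mod_lt _ (by positivity)))]
      refine Finset.sum_congr rfl (fun y hy => ?_)
      have hcon : ∀ r ∈ (range (2^(n+1+j+1))).filter (fun r => collatz^[n] r % 2^(j+2) = y),
          (if collatz^[n+1] r % 2^(j+1) = x then (1:ℕ) else 0)
            = (if collatz y % 2^(j+1) = x then 1 else 0) := by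
        intro r hr
        simp only [Finset.mem_filter] at hr
        simp only [hpred r, hr.2]
      rw [Finset.sum_congr rfl hcon, Finset.sum_const, smul_eq_mul, mul_comm,
        Finset.card_filter]
    rw [hcard]
    have hsplit : ∀ y ∈ range (2^(j+2)),
        (if collatz y % 2^(j+1) = x then 1 else 0) *
          ((range (2^(n+1+j+1))).filter (fun r => collatz^[n] r % 2^(j+2) = y)).card
        = (if y % 2 = 0 ∧ collatz y % 2^(j+1) = x then 1 else 0) * (cpar n).1
          + (if y % 2 = 1 ∧ collatz y % 2^(j+1) = x then 1 else 0) * (cpar n).2 := by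
      intro y hy
      have hy' : y < 2^(j+2) := Finset.mem_range.mp hy
      have := ih (j+1) y (by
        have : (2:ℕ)^(j+2) = 2^(j+1+1) := by norm_num
        omega)
      rw [show n + 1 + j + 1 = n + (j+1) + 1 by omega, show (2:ℕ)^(j+2) = 2^(j+1+1) by norm_num,
        this]
      by_cases h1 : y % 2 = 0
      · by_cases h2 : collatz y % 2^(j+1) = x <;> simp [h1, h2]
      · have h1' : y % 2 = 1 := by omega
        by_cases h2 : collatz y % 2^(j+1) = x <;> simp [h1', h2]
    rw [Finset.sum_congr rfl hsplit, Finset.sum_add_distrib, ← Finset.sum_mul, ← Finset.sum_mul,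
      ← Finset.card_filter, ← Finset.card_filter, cardE j x hx]
    by_cases hxe : x % 2 = 0
    · rw [cardO_even j x hx hxe, if_pos hxe]
      simp only [cpar]
      ring
    · have hxo : x % 2 = 1 := by omega
      rw [cardO_odd j x hxo, if_neg hxe]
      simp only [cpar]
      ring

/-- Density of a periodic set. -/
lemma periodic_density (p : ℕ → Prop) [DecidablePred p] (P : ℕ) (hP : 0 < P)
    (hper : ∀ k, p (k + P) ↔ p k) :
    Tendsto (fun m : ℕ => (((Finset.Icc 1 m).filter p).card : ℝ) / m) atTop
      (nhds ((((range P).filter p).card : ℝ) / P)) := by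
  set A : ℕ := ((range P).filter p).card with hA
  have hA' : ((Ioc 0 P).filter p).card = A := by
    have e1 : range (P+1) = insert P (range P) := Finset.range_add_one
    have e2 : range (P+1) = insert 0 (Ioc 0 P) := by
      ext a; simp only [mem_range, mem_insert, mem_Ioc]; omega
    have c1 : ((range (P+1)).filter p).card
        = ((range P).filter p).card + (if p P then 1 else 0) := by
      rw [e1, filter_insert]
      split
      · rw [card_insert_of_notMem (by simp)]
      · rfl
    have c2 : ((range (P+1)).filter p).card
        = ((Ioc 0 P).filter p).card + (if p 0 then 1 else 0) := by
      rw [e2, filter_insert]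
      split
      · rw [card_insert_of_notMem (by simp)]
      · rfl
    have hp0 : p P ↔ p 0 := by simpa using hper 0
    by_cases h0 : p 0
    · rw [if_pos h0] at c2; rw [if_pos (hp0.mpr h0)] at c1; omega
    · rw [if_neg h0] at c2; rw [if_neg (fun h => h0 (hp0.mp h))] at c1; omega
  have hblock : ∀ x, ((Ioc x (x+P)).filter p).card = A := by
    intro x
    induction x with
    | zero => simpa using hA'
    | succ x ih =>
      have e1 : Ioc x (x+P) = insert (x+1) (Ioc (x+1) (x+P)) := by
        ext a; simp only [mem_Ioc, mem_insert]; omega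
      have e2 : Ioc (x+1) (x+1+P) = insert (x+1+P) (Ioc (x+1) (x+P)) := by
        ext a; simp only [mem_Ioc, mem_insert]; omega
      have c1 : ((Ioc x (x+P)).filter p).card
          = ((Ioc (x+1) (x+P)).filter p).card + (if p (x+1) then 1 else 0) := by
        rw [e1, filter_insert]
        split
        · rw [card_insert_of_notMem (by simp)]
        · rfl
      have c2 : ((Ioc (x+1) (x+1+P)).filter p).card
          = ((Ioc (x+1) (x+P)).filter p).card + (if p (x+1+P) then 1 else 0) := by
        rw [e2, filter_insert]
        split
        · rw [card_insert_of_notMem (by simp)]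
        · rfl
      have hpp : p (x+1+P) ↔ p (x+1) := hper (x+1)
      by_cases h0 : p (x+1)
      · rw [if_pos h0] at c1; rw [if_pos (hpp.mpr h0)] at c2; omega
      · rw [if_neg h0] at c1; rw [if_neg (fun h => h0 (hpp.mp h))] at c2; omega
  have hq : ∀ q, ((Ioc 0 (P*q)).filter p).card = q * A := by
    intro q
    induction q with
    | zero => simp
    | succ q ih =>
      have e : Ioc 0 (P*(q+1)) = Ioc 0 (P*q) ∪ Ioc (P*q) (P*q+P) := by
        rw [Finset.Ioc_union_Ioc_eq_Ioc (Nat.zero_le _) (Nat.le_add_right _ _),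
          show P*(q+1) = P*q+P by ring]
      have hdisj : Disjoint (Ioc 0 (P*q)) (Ioc (P*q) (P*q+P)) := by
        rw [Finset.disjoint_left]
        intro a ha ha'
        simp only [mem_Ioc] at ha ha'
        omega
      rw [e, filter_union, card_union_of_disjoint (disjoint_filter_filter hdisj),
        ih, hblock]
      ring
  have key : ∀ m : ℕ, 1 ≤ m →
      |(((Finset.Icc 1 m).filter p).card : ℝ) / m - (A : ℝ) / P| ≤ (P : ℝ) / m := by
    intro m hm
    set T : ℕ := ((Finset.Icc 1 m).filter p).card with hT
    have hIcc : Finset.Icc 1 m = Ioc 0 m := Finset.Icc_add_one_left_eq_Ioc 0 m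
    obtain ⟨q, h3, h4⟩ : ∃ q, P * q ≤ m ∧ m < P * (q+1) := by
      refine ⟨m / P, ?_, ?_⟩
      · have hdm := Nat.div_add_mod m P
        omega
      · have hdm := Nat.div_add_mod m P
        have hmod := Nat.mod_lt m hP
        rw [mul_add, mul_one]
        omega
    have h1 : q * A ≤ T := by
      rw [hT, hIcc, ← hq q]
      exact card_le_card (filter_subset_filter p (Finset.Ioc_subset_Ioc_right h3))
    have h2 : T ≤ (q+1) * A := by
      rw [hT, hIcc, ← hq (q+1)]
      exact card_le_card (filter_subset_filter p (Finset.Ioc_subset_Ioc_right h4.le))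
    have hAP : A ≤ P := by
      calc A ≤ (range P).card := card_filter_le _ _
        _ = P := card_range P
    have hmR : (0:ℝ) < m := by exact_mod_cast hm
    have hPR : (0:ℝ) < P := by exact_mod_cast hP
    have e1 : (P:ℝ) * q ≤ m := by exact_mod_cast h3
    have e2 : (m:ℝ) < P * (q+1) := by exact_mod_cast h4
    have e3 : (q:ℝ) * A ≤ T := by exact_mod_cast h1
    have e4 : (T:ℝ) ≤ (q+1) * A := by exact_mod_cast h2
    have e5 : (A:ℝ) ≤ P := by exact_mod_cast hAP
    have e6 : (0:ℝ) ≤ A := by positivity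
    have hX : |(T:ℝ)*P - (m:ℝ)*A| ≤ (P:ℝ)*P := by
      rw [abs_le]; constructor <;> nlinarith
    have h9 : ((P:ℝ)*P)/((m:ℝ)*P) = (P:ℝ)/m := by
      rw [mul_comm (m:ℝ) (P:ℝ)]
      rw [div_eq_div_iff (by positivity) hmR.ne']
      ring
    rw [div_sub_div _ _ hmR.ne' hPR.ne', abs_div, abs_of_pos (mul_pos hmR hPR), ← h9]
    gcongr
  rw [← tendsto_sub_nhds_zero_iff]
  refine squeeze_zero_norm' (a := fun m : ℕ => (P:ℝ)/m) ?_
    (tendsto_const_div_atTop_nhds_zero_nat (P:ℝ))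
  filter_upwards [eventually_ge_atTop 1] with m hm
  simpa [Real.norm_eq_abs] using key m hm

lemma count_even (n : ℕ) :
    ((range (2^(n+1))).filter (fun r => collatz^[n] r % 2 = 0)).card = (cpar n).1 := by
  have h := collatz_count n 0 0 (by norm_num)
  simpa using h

lemma count_odd (n : ℕ) :
    ((range (2^(n+1))).filter (fun r => collatz^[n] r % 2 = 1)).card = (cpar n).2 := by
  have h := collatz_count n 0 1 (by norm_num)
  simpa using h

lemma collatz_per (n k : ℕ) : collatz^[n] (k + 2^(n+1)) % 2 = collatz^[n] k % 2 := by
  have h := collatz_iter_mod_period n 1 k 1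
  rwa [mul_one, pow_one] at h

lemma cpar_closed (n : ℕ) :
    ((cpar n).1 : ℝ) = 2^(n+1) * (2/3 - (-1/2:ℝ)^n/6)
    ∧ ((cpar n).2 : ℝ) = 2^(n+1) * (1/3 + (-1/2:ℝ)^n/6) := by
  induction n with
  | zero => norm_num [cpar]
  | succ n ih =>
    obtain ⟨ih1, ih2⟩ := ih
    simp only [cpar]
    constructor
    · push_cast
      rw [ih1, ih2, pow_succ (2:ℝ) (n+1), pow_succ (-1/2:ℝ) n]
      ring
    · rw [ih1, pow_succ (2:ℝ) (n+1), pow_succ (-1/2:ℝ) n]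
      ring

end CollatzAux

open CollatzAux in
theorem collatz_parity_density_limit (ν₀ ν₁ : ℕ → ℝ)
    (h₀ : ∀ n : ℕ, Tendsto (fun m : ℕ =>
        (((Finset.Icc 1 m).filter (fun k => collatz^[n] k % 2 = 0)).card : ℝ) / m)
      atTop (nhds (ν₀ n)))
    (h₁ : ∀ n : ℕ, Tendsto (fun m : ℕ =>
        (((Finset.Icc 1 m).filter (fun k => collatz^[n] k % 2 = 1)).card : ℝ) / m)
      atTop (nhds (ν₁ n))) :
    Tendsto ν₀ atTop (nhds (2/3)) ∧ Tendsto ν₁ atTop (nhds (1/3)) := by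
  have h2cast : ∀ n : ℕ, ((2^(n+1) : ℕ) : ℝ) = (2:ℝ)^(n+1) := by
    intro n; push_cast; ring
  have hν₀ : ∀ n, ν₀ n = 2/3 - (-1/2:ℝ)^n/6 := by
    intro n
    have hd := periodic_density (fun k => collatz^[n] k % 2 = 0) (2^(n+1)) (by positivity)
      (fun k => by simp only [collatz_per n k])
    rw [count_even n] at hd
    have huniq := tendsto_nhds_unique (h₀ n) hd
    rw [huniq, h2cast n, (cpar_closed n).1, mul_div_cancel_left₀ _ (by positivity)]
  have hν₁ : ∀ n, ν₁ n = 1/3 + (-1/2:ℝ)^n/6 := by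
    intro n
    have hd := periodic_density (fun k => collatz^[n] k % 2 = 1) (2^(n+1)) (by positivity)
      (fun k => by simp only [collatz_per n k])
    rw [count_odd n] at hd
    have huniq := tendsto_nhds_unique (h₁ n) hd
    rw [huniq, h2cast n, (cpar_closed n).2, mul_div_cancel_left₀ _ (by positivity)]
  have hp : Tendsto (fun n : ℕ => ((-1/2:ℝ))^n) atTop (nhds 0) :=
    tendsto_pow_atTop_nhds_zero_of_abs_lt_one (by rw [abs_lt]; norm_num)
  constructor
  · have hlim : Tendsto (fun n : ℕ => 2/3 - (-1/2:ℝ)^n/6) atTop (nhds (2/3)) := by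
      simpa using (tendsto_const_nhds (x := (2/3:ℝ)) (f := atTop)).sub (hp.div_const 6)
    exact hlim.congr (fun n => (hν₀ n).symm)
  · have hlim : Tendsto (fun n : ℕ => 1/3 + (-1/2:ℝ)^n/6) atTop (nhds (1/3)) := by
      simpa using (tendsto_const_nhds (x := (1/3:ℝ)) (f := atTop)).add (hp.div_const 6)
    exact hlim.congr (fun n => (hν₁ n).symm)
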